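/- Let A be a connected subset of a metric space M and let x, y ∈ A with x ≠ y. Then for all sufficiently small ε > 0 there exist an integer n and points x₁, …, xₙ ∈ A with x₁ = x, xₙ = y, and such that for all 1 ≤ i, j ≤ n the open balls of radius ε satisfy B_ε(xᵢ) ∩ B_ε(xⱼ) ≠ ∅ if and only if |i − j| ≤ 1 (equivalently, d(xᵢ, xⱼ) < 2ε if and only if |i − j| ≤ 1). -/
import Mathlib


open Set

/-- if A is connected in a metric space and x ≠ y are points of A, then for
all sufficiently small ε > 0 there are points x₁ = x, x₂, …, xₙ = y in A such that the open
ε-balls around them satisfy B_ε(xᵢ) ∩ B_ε(xⱼ) ≠ ∅ if and only if |i − j| ≤ 1. -/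
theorem stmt18 {M : Type*} [MetricSpace M] {A : Set M} (hA : IsConnected A)
    {x y : M} (hx : x ∈ A) (hy : y ∈ A) (hxy : x ≠ y) :
    ∃ ε₀ > (0 : ℝ), ∀ ε : ℝ, 0 < ε → ε ≤ ε₀ →
      ∃ (n : ℕ) (p : ℕ → M), 1 ≤ n ∧
        (∀ i : ℕ, 1 ≤ i → i ≤ n → p i ∈ A) ∧
        p 1 = x ∧ p n = y ∧
        (∀ i j : ℕ, 1 ≤ i → i ≤ n → 1 ≤ j → j ≤ n →
          ((Metric.ball (p i) ε ∩ Metric.ball (p j) ε).Nonempty ↔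
            |(i : ℤ) - (j : ℤ)| ≤ 1)) := by
  classical
  refine ⟨1, one_pos, fun ε hε _ => ?_⟩
  set T : M → M → Prop := fun a b => (Metric.ball a ε ∩ Metric.ball b ε).Nonempty with hTdef
  have hTsymm : ∀ a b, T a b → T b a := by
    intro a b h
    simpa [hTdef, Set.inter_comm] using h
  have hTnear : ∀ a b : M, dist a b < ε → T a b := by
    intro a b h
    exact ⟨a, Metric.mem_ball_self hε, Metric.mem_ball.2 h⟩
  -- the ε-chain connectivity component of x in A
  set C : Set M := {z | z ∈ A ∧ ∃ n : ℕ, 1 ≤ n ∧ ∃ p : ℕ → M, p 1 = x ∧ p n = z ∧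
      (∀ i, 1 ≤ i → i ≤ n → p i ∈ A) ∧
      (∀ i, 1 ≤ i → i + 1 ≤ n → dist (p i) (p (i + 1)) < ε)} with hCdef
  have hxC : x ∈ C := ⟨hx, 1, le_refl 1, fun _ => x, rfl, rfl,
    fun _ _ _ => hx, fun i h1 h2 => by omega⟩
  -- extension lemma
  have hext : ∀ z ∈ C, ∀ a ∈ A, dist z a < ε → a ∈ C := by
    rintro z ⟨hzA, n, hn1, p, hp1, hpn, hpA, hpd⟩ a haA hda
    refine ⟨haA, n + 1, by omega, fun k => if k ≤ n then p k else a, ?_, ?_, ?_, ?_⟩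
    · beta_reduce
      rw [if_pos hn1]
      exact hp1
    · simp
    · intro i h1 h2
      by_cases h : i ≤ n
      · simpa [h] using hpA i h1 h
      · simpa [h] using haA
    · intro i h1 h2
      by_cases h : i + 1 ≤ n
      · have h' : i ≤ n := by omega
        simpa [h, h'] using hpd i h1 h
      · have hi : i = n := by omega
        have h' : i ≤ n := by omega
        beta_reduce
        rw [if_pos h', if_neg h, hi, hpn]
        exact hda
  -- y ∈ C by connectedness
  have hyC : y ∈ C := by
    by_contra hyC
    set U : Set M := ⋃ z ∈ C, Metric.ball z ε with hU
    set V : Set M := ⋃ z ∈ A \ C, Metric.ball z ε with hV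
    have hUo : IsOpen U := isOpen_biUnion fun _ _ => Metric.isOpen_ball
    have hVo : IsOpen V := isOpen_biUnion fun _ _ => Metric.isOpen_ball
    have hcov : A ⊆ U ∪ V := by
      intro a ha
      by_cases h : a ∈ C
      · exact Or.inl (Set.mem_biUnion h (Metric.mem_ball_self hε))
      · exact Or.inr (Set.mem_biUnion ⟨ha, h⟩ (Metric.mem_ball_self hε))
    have hxU : (A ∩ U).Nonempty := ⟨x, hx, Set.mem_biUnion hxC (Metric.mem_ball_self hε)⟩
    have hyV : (A ∩ V).Nonempty := ⟨y, hy, Set.mem_biUnion ⟨hy, hyC⟩ (Metric.mem_ball_self hε)⟩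
    obtain ⟨a, haA, haU, haV⟩ := hA.isPreconnected U V hUo hVo hcov hxU hyV
    obtain ⟨z, hzC, hza⟩ := Set.mem_iUnion₂.1 haU
    obtain ⟨w, hwAC, hwa⟩ := Set.mem_iUnion₂.1 haV
    have haC : a ∈ C := hext z hzC a haA (Metric.mem_ball'.1 hza)
    have hwC : w ∈ C := hext a haC w hwAC.1 (Metric.mem_ball.1 hwa)
    exact hwAC.2 hwC
  -- existence of T-chain
  have hPex : ∃ n : ℕ, 1 ≤ n ∧ ∃ p : ℕ → M, p 1 = x ∧ p n = y ∧
      (∀ i, 1 ≤ i → i ≤ n → p i ∈ A) ∧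
      (∀ i, 1 ≤ i → i + 1 ≤ n → T (p i) (p (i + 1))) := by
    obtain ⟨-, n, hn1, p, hp1, hpn, hpA, hpd⟩ := hyC
    exact ⟨n, hn1, p, hp1, hpn, hpA, fun i h1 h2 => hTnear _ _ (hpd i h1 h2)⟩
  set P : ℕ → Prop := fun n => 1 ≤ n ∧ ∃ p : ℕ → M, p 1 = x ∧ p n = y ∧
      (∀ i, 1 ≤ i → i ≤ n → p i ∈ A) ∧
      (∀ i, 1 ≤ i → i + 1 ≤ n → T (p i) (p (i + 1))) with hPdef
  have hPex' : ∃ n, P n := hPex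
  set n := Nat.find hPex' with hn
  obtain ⟨hn1, p, hp1, hpn, hpA, hpd⟩ := Nat.find_spec hPex'
  -- separation: non-adjacent points have disjoint balls
  have hsep : ∀ i j : ℕ, 1 ≤ i → i + 2 ≤ j → j ≤ n → ¬ T (p i) (p j) := by
    intro i j h1 h2 h3 hTij
    set m := n - (j - i - 1) with hm
    have hmn : m + (j - i - 1) = n := by omega
    have hmi : i + 1 ≤ m := by omega
    have hPm : P m := by
      refine ⟨by omega, fun k => if k ≤ i then p k else p (k + (j - i - 1)), ?_, ?_, ?_, ?_⟩
      · beta_reduce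
        rw [if_pos h1]
        exact hp1
      · have hni : ¬ (m ≤ i) := by omega
        beta_reduce
        rw [if_neg hni, hmn]
        exact hpn
      · intro k hk1 hk2
        by_cases h : k ≤ i
        · simpa [h] using hpA k hk1 (by omega)
        · simpa [h] using hpA (k + (j - i - 1)) (by omega) (by omega)
      · intro k hk1 hk2
        by_cases h : k + 1 ≤ i
        · have h' : k ≤ i := by omega
          simpa [h, h'] using hpd k hk1 (by omega)
        · by_cases h' : k ≤ i
          · have hki : k = i := by omega
            beta_reduce
            rw [if_pos h', if_neg h, hki]
            have e : i + 1 + (j - i - 1) = j := by omega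
            rw [e]
            exact hTij
          · beta_reduce
            rw [if_neg h', if_neg h]
            have e : k + 1 + (j - i - 1) = k + (j - i - 1) + 1 := by omega
            rw [e]
            exact hpd (k + (j - i - 1)) (by omega) (by omega)
    have : m < n := by omega
    exact Nat.find_min hPex' this hPm
  refine ⟨n, p, hn1, hpA, hp1, hpn, ?_⟩
  intro i j hi1 hin hj1 hjn
  constructor
  · intro hT
    by_contra hij
    rw [abs_le] at hij
    have : i + 2 ≤ j ∨ j + 2 ≤ i := by omega
    rcases this with h | h
    · exact hsep i j hi1 h hjn hT
    · exact hsep j i hj1 h hin (hTsymm _ _ hT)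
  · intro hij
    rw [abs_le] at hij
    have : i = j ∨ j = i + 1 ∨ i = j + 1 := by omega
    rcases this with h | h | h
    · subst h
      exact ⟨p i, Metric.mem_ball_self hε, Metric.mem_ball_self hε⟩
    · subst h
      exact hpd i hi1 hjn
    · subst h
      exact hTsymm _ _ (hpd j hj1 hin)
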